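/- Let τ > 0, θ ∈ ℝ, n ∈ ℕ, and let W : Fin n → ℝ and t : Fin n → ℝ satisfy ∑_j W_j · exp(t_j/τ) > 0 and ∑_j W_j − θ > 0. Set t* := τ · log((∑_j W_j · exp(t_j/τ)) / (∑_j W_j − θ)) and assume t_j ≤ t* for all j. Then the nLIF membrane potential at time t*, namely ∑_j W_j · (1 − exp(−(t* − t_j)/τ)), equals θ. -/

import Mathlib

open Real Finset

/-- For an nLIF neuron with synaptic time constant `τ > 0`, threshold `θ`,
weights `W` and input spike times `t` satisfying `∑ j, W j * exp (t j / τ) > 0` and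
`∑ j, W j - θ > 0`, if `t* = τ * log ((∑ j, W j * exp (t j / τ)) / (∑ j, W j - θ))` and all
inputs spike no later than `t*`, then the membrane potential
`u(s) = ∑_{j : t j ≤ s} W j * (1 - exp (-(s - t j) / τ))` at time `t*` equals `θ`. -/
theorem nLIF_membrane_at_spike_time_eq_threshold
    (τ θ : ℝ) (hτ : 0 < τ) (n : ℕ) (W t : Fin n → ℝ)
    (hA : 0 < ∑ j, W j * Real.exp (t j / τ))
    (hB : 0 < (∑ j, W j) - θ)
    (tstar : ℝ)
    (htstar : tstar = τ * Real.log ((∑ j, W j * Real.exp (t j / τ)) / ((∑ j, W j) - θ)))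
    (hle : ∀ j, t j ≤ tstar) :
    (∑ j ∈ Finset.univ.filter (fun j => t j ≤ tstar),
      W j * (1 - Real.exp (-(tstar - t j) / τ))) = θ := by
  have hfilter : Finset.univ.filter (fun j => t j ≤ tstar) = Finset.univ := by
    apply Finset.filter_true_of_mem
    intro j _
    exact hle j
  rw [hfilter]
  have hexp : Real.exp (-tstar / τ) = ((∑ j, W j) - θ) / (∑ j, W j * Real.exp (t j / τ)) := by
    rw [htstar]
    rw [show -(τ * Real.log ((∑ j, W j * Real.exp (t j / τ)) / ((∑ j, W j) - θ))) / τ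
        = -Real.log ((∑ j, W j * Real.exp (t j / τ)) / ((∑ j, W j) - θ)) by
      field_simp]
    rw [Real.exp_neg, Real.exp_log (div_pos hA hB), inv_div]
  have key : ∑ j, W j * Real.exp (-(tstar - t j) / τ) = (∑ j, W j) - θ := by
    have : ∀ j, W j * Real.exp (-(tstar - t j) / τ)
        = (W j * Real.exp (t j / τ)) * Real.exp (-tstar / τ) := by
      intro j
      rw [mul_assoc, ← Real.exp_add]
      ring_nf
    rw [Finset.sum_congr rfl (fun j _ => this j), ← Finset.sum_mul, hexp]
    field_simp
  calc (∑ j, W j * (1 - Real.exp (-(tstar - t j) / τ)))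
      = (∑ j, W j) - ∑ j, W j * Real.exp (-(tstar - t j) / τ) := by
        rw [← Finset.sum_sub_distrib]; congr 1; ext j; ring
    _ = θ := by rw [key]; ring
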